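/- Let X, Y ∈ Mat_n(ℂ), i ∈ ℂⁿ, and let j : ℂⁿ → ℂ[x] be a ℂ-linear map satisfying: for every v ∈ ℂⁿ, v + X·Y·v − Y·X·v = (j(v))(X)·i. Let h : ℂⁿ → ℂ[x] be any ℂ-linear map, and define the ℂ-linear endomorphism Y′ of ℂⁿ by Y′(v) = Y·v + (h(v))(X)·i and the ℂ-linear map j′ : ℂⁿ → ℂ[x] by j′(v) = j(v) + x·h(v) − h(X·v). Then the transformed data also satisfy the relation: for every v ∈ ℂⁿ, v + X·Y′(v) − Y′(X·v) = (j′(v))(X)·i. -/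
import Mathlib


/-- Modifying the Koszul data `(X, Y, i, j(x))` of an `𝒪`-framed `𝒟`-bundle on `𝐀¹` by a
chain homotopy `h` yields `(X, Y′, i, j′)` with `Y′(v) = Y·v + (h v)(X)·i` and
`j′(v) = j(v) + x·h(v) − h(X·v)`, and the defining relation
`∀ v, v + X·Y′(v) − Y′(X·v) = (j′ v)(X)·i` is preserved. -/
theorem homotopy_preserves_CM_relation (n : ℕ)
    (X Y : Matrix (Fin n) (Fin n) ℂ) (i : Fin n → ℂ)
    (j h : (Fin n → ℂ) →ₗ[ℂ] Polynomial ℂ)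
    (hrel : ∀ v : Fin n → ℂ,
      v + (X * Y).mulVec v - (Y * X).mulVec v = (Polynomial.aeval X (j v)).mulVec i)
    (Y' : (Fin n → ℂ) →ₗ[ℂ] (Fin n → ℂ))
    (hY' : ∀ v : Fin n → ℂ, Y' v = Y.mulVec v + (Polynomial.aeval X (h v)).mulVec i)
    (j' : (Fin n → ℂ) →ₗ[ℂ] Polynomial ℂ)
    (hj' : ∀ v : Fin n → ℂ, j' v = j v + Polynomial.X * h v - h (X.mulVec v)) :
    ∀ v : Fin n → ℂ,
      v + X.mulVec (Y' v) - Y' (X.mulVec v) = (Polynomial.aeval X (j' v)).mulVec i := by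
  intro v
  have hr := hrel v
  rw [hY' v, hY' (X.mulVec v), hj' v]
  simp only [map_add, map_sub, map_mul, Polynomial.aeval_X,
    Matrix.add_mulVec, Matrix.sub_mulVec, Matrix.mulVec_add,
    Matrix.mulVec_mulVec] at *
  rw [← hr]
  abel
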